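/- For every integer k ≥ 1, the k-th Catalan number satisfies 4^k/(√π · (k+1)^{3/2}) < Cat_k < 4^k/(√π · k^{3/2}). -/

import Mathlib

open scoped Real

open scoped Topology
open Filter Stirling

/-- The `n`-th Catalan number `Cat_n = (2n)!/(n!(n+1)!)`, as a real number. -/
noncomputable def catalanR (n : ℕ) : ℝ :=
  ((2 * n).factorial : ℝ) / ((n.factorial : ℝ) * ((n + 1).factorial : ℝ))

lemma catalanR_pos (n : ℕ) : 0 < catalanR n := by
  unfold catalanR; positivity

lemma catalanR_succ (k : ℕ) :
    catalanR (k + 1) = catalanR k * (2 * (2 * (k:ℝ) + 1)) / ((k:ℝ) + 2) := by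
  have e1 : ((2 * (k+1)).factorial : ℝ) = (2*(k:ℝ)+2) * (2*(k:ℝ)+1) * ((2*k).factorial : ℝ) := by
    rw [show 2*(k+1) = (2*k+1)+1 from by ring, Nat.factorial_succ, Nat.factorial_succ]
    push_cast; ring
  have e2 : ((k+1).factorial : ℝ) = ((k:ℝ)+1) * (k.factorial : ℝ) := by
    rw [Nat.factorial_succ]; push_cast; ring
  have e3 : ((k+1+1).factorial : ℝ) = ((k:ℝ)+2) * ((k+1).factorial : ℝ) := by
    rw [Nat.factorial_succ]; push_cast; ring
  have hf : (k.factorial : ℝ) ≠ 0 := by positivity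
  have hf2 : ((k+1).factorial : ℝ) ≠ 0 := by positivity
  unfold catalanR
  rw [e1, e3, e2]
  field_simp

/-- Auxiliary ratio `(2k)! √k / ((k!)² 4^k)`, which equals `stirlingSeq (2k)/stirlingSeq k ^ 2`. -/
noncomputable def rseq (k : ℕ) : ℝ :=
  ((2 * k).factorial : ℝ) * Real.sqrt k / ((k.factorial : ℝ) ^ 2 * 4 ^ k)

lemma rseq_eq (k : ℕ) (hk : 1 ≤ k) :
    rseq k = Stirling.stirlingSeq (2 * k) / (Stirling.stirlingSeq k) ^ 2 := by
  have hk0 : (0:ℝ) < k := by exact_mod_cast hk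
  have hs : Real.sqrt (2 * (2 * k) : ℝ) = 2 * Real.sqrt k := by
    rw [show (2 * (2 * (k:ℝ))) = 2^2 * k by ring,
      Real.sqrt_mul (by positivity), Real.sqrt_sq (by norm_num)]
  have hpow : (((2 * k : ℕ):ℝ) / Real.exp 1) ^ (2 * k) = 4 ^ k * (((k:ℝ) / Real.exp 1) ^ k) ^ 2 := by
    push_cast
    rw [mul_div_assoc, mul_pow, pow_mul 2 2 k, mul_comm 2 k, pow_mul]
    norm_num
  rw [rseq, Stirling.stirlingSeq, Stirling.stirlingSeq, hpow]
  push_cast [hs]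
  have hA : ((k:ℝ)^k / Real.exp 1^k) ≠ 0 := by positivity
  have hB : Real.sqrt k ≠ 0 := by positivity
  have hB2 : Real.sqrt k * Real.sqrt k = k := Real.mul_self_sqrt (le_of_lt hk0)
  have hC2 : Real.sqrt (2 * (k:ℝ)) * Real.sqrt (2 * (k:ℝ)) = 2 * k :=
    Real.mul_self_sqrt (by positivity)
  have hC : Real.sqrt (2 * (k:ℝ)) ≠ 0 := by positivity
  have hf : (k.factorial : ℝ) ≠ 0 := by positivity
  field_simp
  ring_nf
  rw [Real.sq_sqrt (by positivity : (0:ℝ) ≤ (k:ℝ)), Real.sq_sqrt (by positivity : (0:ℝ) ≤ (k:ℝ) * 2)]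

lemma rseq_tendsto : Tendsto rseq atTop (𝓝 (1 / Real.sqrt π)) := by
  have hπ : (0:ℝ) < Real.sqrt π := Real.sqrt_pos.mpr Real.pi_pos
  have h2 : Tendsto (fun k : ℕ => 2 * k) atTop atTop :=
    tendsto_atTop_mono (fun n => by simp; omega) tendsto_id
  have ht : Tendsto (fun k : ℕ => stirlingSeq (2 * k) / (stirlingSeq k) ^ 2) atTop
      (𝓝 (Real.sqrt π / (Real.sqrt π) ^ 2)) :=
    (tendsto_stirlingSeq_sqrt_pi.comp h2).div (tendsto_stirlingSeq_sqrt_pi.pow 2)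
      (by positivity)
  have hval : Real.sqrt π / (Real.sqrt π) ^ 2 = 1 / Real.sqrt π := by
    rw [sq]; field_simp
  rw [← hval]
  refine ht.congr' ?_
  filter_upwards [eventually_ge_atTop 1] with k hk
  exact (rseq_eq k hk).symm

noncomputable def fseq (k : ℕ) : ℝ :=
  catalanR k * (Real.sqrt π * ((k:ℝ) * Real.sqrt k)) / 4 ^ k

noncomputable def gseq (k : ℕ) : ℝ :=
  catalanR k * (Real.sqrt π * (((k:ℝ) + 1) * Real.sqrt ((k:ℝ) + 1))) / 4 ^ k

lemma fseq_tendsto : Tendsto fseq atTop (𝓝 1) := by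
  have hπ : (0:ℝ) < Real.sqrt π := Real.sqrt_pos.mpr Real.pi_pos
  have h1 : Tendsto (fun k : ℕ => rseq k * (Real.sqrt π * ((k:ℝ) / ((k:ℝ) + 1)))) atTop
      (𝓝 (1 / Real.sqrt π * (Real.sqrt π * 1))) :=
    rseq_tendsto.mul (tendsto_const_nhds.mul (tendsto_natCast_div_add_atTop (1:ℝ)))
  have hval : 1 / Real.sqrt π * (Real.sqrt π * 1) = 1 := by field_simp
  rw [hval] at h1
  refine h1.congr' ?_
  filter_upwards [eventually_ge_atTop 1] with k hk
  have hk0 : (0:ℝ) < k := by exact_mod_cast hk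
  have e2 : ((k+1).factorial : ℝ) = ((k:ℝ)+1) * (k.factorial : ℝ) := by
    rw [Nat.factorial_succ]; push_cast; ring
  rw [fseq, rseq, catalanR, e2]
  have hf : (k.factorial : ℝ) ≠ 0 := by positivity
  field_simp

lemma gseq_tendsto : Tendsto gseq atTop (𝓝 1) := by
  have hπ : (0:ℝ) < Real.sqrt π := Real.sqrt_pos.mpr Real.pi_pos
  have hq : Tendsto (fun k : ℕ => Real.sqrt (1 + 1 / (k:ℝ))) atTop (𝓝 1) := by
    have := (tendsto_const_nhds.add tendsto_one_div_atTop_nhds_zero_nat).sqrt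
      (x := (1:ℝ) + 0)
    simpa using this
  have h1 : Tendsto (fun k : ℕ => rseq k * (Real.sqrt π * Real.sqrt (1 + 1 / (k:ℝ)))) atTop
      (𝓝 (1 / Real.sqrt π * (Real.sqrt π * 1))) :=
    rseq_tendsto.mul (tendsto_const_nhds.mul hq)
  have hval : 1 / Real.sqrt π * (Real.sqrt π * 1) = 1 := by field_simp
  rw [hval] at h1
  refine h1.congr' ?_
  filter_upwards [eventually_ge_atTop 1] with k hk
  have hk0 : (0:ℝ) < k := by exact_mod_cast hk
  have hsq : Real.sqrt (1 + 1 / (k:ℝ)) = Real.sqrt ((k:ℝ) + 1) / Real.sqrt k := by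
    rw [← Real.sqrt_div (by positivity)]
    congr 1
    field_simp
  have e2 : ((k+1).factorial : ℝ) = ((k:ℝ)+1) * (k.factorial : ℝ) := by
    rw [Nat.factorial_succ]; push_cast; ring
  rw [gseq, rseq, catalanR, e2, hsq]
  have hf : (k.factorial : ℝ) ≠ 0 := by positivity
  have hB : Real.sqrt (k:ℝ) ≠ 0 := by positivity
  field_simp

lemma key1 (k : ℕ) :
    2 * ((k:ℝ) + 2) * k * Real.sqrt k < (2 * k + 1) * (k + 1) * Real.sqrt ((k:ℝ) + 1) := by
  have hk0 : (0:ℝ) ≤ k := Nat.cast_nonneg k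
  apply lt_of_pow_lt_pow_left₀ 2 (by positivity)
  simp only [mul_pow]
  rw [Real.sq_sqrt hk0, Real.sq_sqrt (by positivity : (0:ℝ) ≤ (k:ℝ) + 1)]
  nlinarith [hk0, sq_nonneg (k:ℝ), pow_nonneg hk0 3]

lemma key2 (k : ℕ) :
    (2 * (k:ℝ) + 1) * Real.sqrt ((k:ℝ) + 2) < 2 * ((k:ℝ) + 1) * Real.sqrt ((k:ℝ) + 1) := by
  have hk0 : (0:ℝ) ≤ k := Nat.cast_nonneg k
  apply lt_of_pow_lt_pow_left₀ 2 (by positivity)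
  simp only [mul_pow]
  rw [Real.sq_sqrt (by positivity : (0:ℝ) ≤ (k:ℝ) + 2),
    Real.sq_sqrt (by positivity : (0:ℝ) ≤ (k:ℝ) + 1)]
  nlinarith [hk0, sq_nonneg (k:ℝ)]

lemma fseq_step (k : ℕ) : fseq k < fseq (k + 1) := by
  have hc : 0 < catalanR k := catalanR_pos k
  have hπ : (0:ℝ) < Real.sqrt π := Real.sqrt_pos.mpr Real.pi_pos
  have h4 : (0:ℝ) < 4 ^ k := by positivity
  have hk2 : (0:ℝ) < (k:ℝ) + 2 := by positivity
  have H := mul_lt_mul_of_pos_left (key1 k) (by positivity : 0 < catalanR k * Real.sqrt π * 4 ^ k)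
  rw [fseq, fseq, catalanR_succ]
  push_cast
  rw [div_lt_div_iff₀ h4 (by positivity), div_mul_eq_mul_div, div_mul_eq_mul_div,
    lt_div_iff₀ hk2, pow_succ]
  nlinarith [H]

lemma gseq_step (k : ℕ) : gseq (k + 1) < gseq k := by
  have hc : 0 < catalanR k := catalanR_pos k
  have hπ : (0:ℝ) < Real.sqrt π := Real.sqrt_pos.mpr Real.pi_pos
  have h4 : (0:ℝ) < 4 ^ k := by positivity
  have hk2 : (0:ℝ) < (k:ℝ) + 2 := by positivity
  have H := mul_lt_mul_of_pos_left (key2 k)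
    (by positivity : 0 < catalanR k * Real.sqrt π * 4 ^ k * ((k:ℝ) + 2))
  rw [gseq, gseq, catalanR_succ]
  push_cast
  rw [show ((k:ℝ) + 1 + 1) = (k:ℝ) + 2 from by ring]
  rw [div_lt_div_iff₀ (by positivity) h4, div_mul_eq_mul_div, div_mul_eq_mul_div,
    div_lt_iff₀ hk2, pow_succ]
  nlinarith [H]

lemma fseq_lt_one (k : ℕ) : fseq k < 1 := by
  have hmono : Monotone fseq := (strictMono_nat_of_lt_succ fseq_step).monotone
  exact lt_of_lt_of_le (fseq_step k) (hmono.ge_of_tendsto fseq_tendsto (k + 1))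

lemma one_lt_gseq (k : ℕ) : 1 < gseq k := by
  have hanti : Antitone gseq := antitone_nat_of_succ_le (fun n => (gseq_step n).le)
  exact lt_of_le_of_lt (hanti.le_of_tendsto gseq_tendsto (k + 1)) (gseq_step k)

lemma rpow_three_halves {x : ℝ} (hx : 0 < x) : x ^ ((3:ℝ)/2) = x * Real.sqrt x := by
  rw [show (3:ℝ)/2 = 1 + 1/2 by norm_num, Real.rpow_add hx, Real.rpow_one,
    Real.sqrt_eq_rpow]

/-- For every integer `k ≥ 1`, the `k`-th Catalan number satisfies
`4^k/(√π (k+1)^{3/2}) < Cat_k < 4^k/(√π k^{3/2})`. -/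
theorem catalan_bounds (k : ℕ) (hk : 1 ≤ k) :
    4 ^ k / (Real.sqrt π * ((k : ℝ) + 1) ^ ((3 : ℝ) / 2)) < catalanR k
    ∧ catalanR k < 4 ^ k / (Real.sqrt π * (k : ℝ) ^ ((3 : ℝ) / 2)) := by
  have hk0 : (0:ℝ) < k := by exact_mod_cast hk
  have hπ : (0:ℝ) < Real.sqrt π := Real.sqrt_pos.mpr Real.pi_pos
  have h4 : (0:ℝ) < 4 ^ k := by positivity
  constructor
  · rw [rpow_three_halves (by positivity : (0:ℝ) < (k:ℝ) + 1),
      div_lt_iff₀ (by positivity)]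
    have hg := one_lt_gseq k
    rw [gseq, one_lt_div h4] at hg
    nlinarith [hg]
  · rw [rpow_three_halves hk0, lt_div_iff₀ (by positivity)]
    have hf := fseq_lt_one k
    rw [fseq, div_lt_one h4] at hf
    nlinarith [hf]
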